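/- arXiv:math/0512581 — 3 statements merged into one kernel-verified Lean document; each statement's English description precedes it below -/
import Mathlib

section
/- Let H be a Hopf algebra over a field k with bijective antipode σ, and let B ⊆ H be a left coideal subalgebra. Fix an integer N ≥ 1 and families of elements ℓ(i,j), ℓ⁺(i,j), ℓ⁻(i,j) ∈ H (1 ≤ i,j ≤ N) together with scalars R^{ij}_{kl}, R̃^{ij}_{kl} ∈ k satisfying: (a) the N² elements ℓ(i,j) are linearly independent over k; (b) Δℓ(i,j) = Σ_{m,n} ℓ(m,n) ⊗ σ(ℓ⁻(i,m))·ℓ⁺(n,j); (c) Δℓ⁺(i,j) = Σ_k ℓ⁺(i,k) ⊗ ℓ⁺(k,j), Δℓ⁻(i,j) = Σ_k ℓ⁻(i,k) ⊗ ℓ⁻(k,j), and ε(ℓ⁺(i,j)) = ε(ℓ⁻(i,j)) = δ_{ij}; (d) (ad_r σ(ℓ⁻(i,m)))(ℓ(k,j)) = Σ_{a,b,l} R^{lk}_{ma} · R̃^{ib}_{lj} · ℓ(a,b) for all i,m,k,j; (e) (ad_r σ⁻¹(ℓ⁺(n,i)))(ℓ(k,j)) = Σ_{a,b,l} R^{bn}_{jl}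 · R̃^{kl}_{ai} · ℓ(a,b) for all n,i,k,j. Let J = (J^j_i) be an N×N matrix over k and set C = Σ_{i,j} J^j_i ℓ(i,j). If C ∈ B and (ad_r b)C = ε(b)·C for all b ∈ B, then J satisfies the reflection equation J₁ R̃ J₂ R = R₂₁ J₂ R̃₂₁ J₁; explicitly, for all indices a, b, m, n one has Σ_{i,j,k,l} J^n_i · R̃^{ib}_{lj} · J^j_k · R^{lk}_{ma} = Σ_{i,j,k,l} R^{bn}_{jl} · J^j_k · R̃^{kl}_{ai} · J^i_m. -/
open scoped TensorProduct

/-- The right adjoint action `(ad_r m) u = σ(m₍₁₎) * u * m₍₂₎`, as a linear map in `u`. -/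
noncomputable def adR (k : Type*) {H : Type*} [Field k] [Ring H] [HopfAlgebra k H]
    (m : H) : H →ₗ[k] H :=
  TensorProduct.lift
    (LinearMap.mk₂ k
      (fun a b => (LinearMap.mulLeft k (HopfAlgebra.antipode (R := k) a)).comp
        (LinearMap.mulRight k b))
      (fun a a' b => by ext x; simp [add_mul, mul_add])
      (fun c a b => by ext x; simp [smul_mul_assoc])
      (fun a b b' => by ext x; simp [mul_add])
      (fun c a b => by ext x; simp [mul_smul_comm]))
    (Coalgebra.comul (R := k) m)

/-- The left adjoint action `(ad_l m) u = m₍₁₎ * u * σ(m₍₂₎)`, as a linear map in `u`. -/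
noncomputable def adL (k : Type*) {H : Type*} [Field k] [Ring H] [HopfAlgebra k H]
    (m : H) : H →ₗ[k] H :=
  TensorProduct.lift
    (LinearMap.mk₂ k
      (fun a b => (LinearMap.mulLeft k a).comp
        (LinearMap.mulRight k (HopfAlgebra.antipode (R := k) b)))
      (fun a a' b => by ext x; simp [add_mul, mul_add])
      (fun c a b => by ext x; simp [smul_mul_assoc])
      (fun a b b' => by ext x; simp [mul_add])
      (fun c a b => by ext x; simp [mul_smul_comm]))
    (Coalgebra.comul (R := k) m)

section Aux
variable {k H : Type*} [Field k] [Ring H] [HopfAlgebra k H]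

local notation "S" => HopfAlgebra.antipode (R := k) (A := H)

lemma sum_S_mul_of_eq (x : H) {ι : Type*} (s : Finset ι) (f g : ι → H)
    (h : ∑ t ∈ s, f t ⊗ₜ[k] g t = Coalgebra.comul (R := k) x) :
    ∑ t ∈ s, S (f t) * g t = Coalgebra.counit (R := k) x • (1 : H) :=
  HopfAlgebra.sum_antipode_mul_eq_smul ⟨s, f, g, h⟩

lemma sum_mul_S_of_eq (x : H) {ι : Type*} (s : Finset ι) (f g : ι → H)
    (h : ∑ t ∈ s, f t ⊗ₜ[k] g t = Coalgebra.comul (R := k) x) :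
    ∑ t ∈ s, f t * S (g t) = Coalgebra.counit (R := k) x • (1 : H) :=
  HopfAlgebra.sum_mul_antipode_eq_smul ⟨s, f, g, h⟩

lemma S_one : S 1 = (1 : H) := by
  have h := sum_S_mul_of_eq (k := k) (1 : H) {(0 : ℕ)} (fun _ => 1) (fun _ => 1) (by
    simp [Algebra.TensorProduct.one_def])
  simpa using h

lemma adR_apply_of_eq (m u : H) {ι : Type*} (s : Finset ι) (f g : ι → H)
    (h : ∑ t ∈ s, f t ⊗ₜ[k] g t = Coalgebra.comul (R := k) m) :
    adR k m u = ∑ t ∈ s, S (f t) * (u * g t) := by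
  rw [adR, ← h, map_sum, LinearMap.sum_apply]
  simp [TensorProduct.lift.tmul]

end Aux

section Aux2
variable {k H : Type*} [Field k] [Ring H] [HopfAlgebra k H]

local notation "S" => HopfAlgebra.antipode (R := k) (A := H)

/-- the trilinear map `x ⊗ (y ⊗ z) ↦ φ x * ψ y * χ z`. -/
noncomputable def mul3 (φ ψ χ : H →ₗ[k] H) : H ⊗[k] (H ⊗[k] H) →ₗ[k] H :=
  TensorProduct.lift
    ((TensorProduct.lift.equiv (RingHom.id k) H H H).toLinearMap.comp
      (LinearMap.mk₂ k (fun x y => LinearMap.mulLeft k (φ x * ψ y) ∘ₗ χ)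
        (fun x x' y => by ext z; simp [map_add, add_mul, mul_assoc])
        (fun c x y => by ext z; simp [smul_mul_assoc, mul_assoc])
        (fun x y y' => by ext z; simp [map_add, mul_add, add_mul, mul_assoc])
        (fun c x y => by ext z; simp [mul_smul_comm, smul_mul_assoc, mul_assoc])))

@[simp] lemma mul3_tmul (φ ψ χ : H →ₗ[k] H) (x y z : H) :
    mul3 φ ψ χ (x ⊗ₜ[k] (y ⊗ₜ[k] z)) = φ x * ψ y * χ z := by
  simp [mul3, TensorProduct.lift.tmul, mul_assoc]

open Coalgebra in
lemma sum_mul_mul_assoc {ι : Type*} {κ Λ : ι → Type*} (φ ψ χ : H →ₗ[k] H) {a : H} (r : Coalgebra.Repr k a ι)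
    (r₁ : (i : r.ι) → Coalgebra.Repr k (r.left i) (κ i))
    (r₂ : (i : r.ι) → Coalgebra.Repr k (r.right i) (Λ i)) :
    ∑ i ∈ r.index, ∑ j ∈ (r₁ i).index,
        φ ((r₁ i).left j) * ψ ((r₁ i).right j) * χ (r.right i)
      = ∑ i ∈ r.index, ∑ j ∈ (r₂ i).index,
        φ (r.left i) * ψ ((r₂ i).left j) * χ ((r₂ i).right j) := by
  have h := Coalgebra.sum_tmul_tmul_eq r r₁ r₂
  have := congrArg (mul3 φ ψ χ) h
  simpa [map_sum] using this

end Aux2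
section Aux3
variable {k H : Type*} [Field k] [Ring H] [HopfAlgebra k H]

local notation "S" => HopfAlgebra.antipode (R := k) (A := H)
local notation "ε" => Coalgebra.counit (R := k) (A := H)

open Coalgebra

lemma sum_counit_smul_left {ι : Type*} {a : H} (r : Coalgebra.Repr k a ι) :
    ∑ i ∈ r.index, ε (r.right i) • r.left i = a := by
  have h := Coalgebra.sum_tmul_counit_eq (R := k) r
  calc ∑ i ∈ r.index, ε (r.right i) • r.left i
      = TensorProduct.rid k H (∑ i ∈ r.index, r.left i ⊗ₜ[k] ε (r.right i)) := by
        rw [map_sum]; simp only [TensorProduct.rid_tmul]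
    _ = TensorProduct.rid k H (a ⊗ₜ[k] 1) := by rw [h]
    _ = a := by simp
lemma sum_counit_smul_right {ι : Type*} {a : H} (r : Coalgebra.Repr k a ι) :
    ∑ i ∈ r.index, ε (r.left i) • r.right i = a := by
  have h := Coalgebra.sum_counit_tmul_eq (R := k) r
  calc ∑ i ∈ r.index, ε (r.left i) • r.right i
      = TensorProduct.lid k H (∑ i ∈ r.index, ε (r.left i) ⊗ₜ[k] r.right i) := by
        rw [map_sum]; simp only [TensorProduct.lid_tmul]
    _ = TensorProduct.lid k H ((1 : k) ⊗ₜ[k] a) := by rw [h]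
    _ = a := by simp

lemma sum_S_mul_mul {ι κ : Type*} {x y : H} (rx : Coalgebra.Repr k x ι) (ry : Coalgebra.Repr k y κ) :
    ∑ i ∈ rx.index, ∑ j ∈ ry.index,
        S (rx.left i * ry.left j) * (rx.right i * ry.right j)
      = ε (x * y) • (1 : H) := by
  rw [← Finset.sum_product']
  refine sum_S_mul_of_eq (x * y) _ _ _ ?_
  rw [Bialgebra.comul_mul, ← rx.eq, ← ry.eq, Finset.sum_mul_sum]
  rw [Finset.sum_product]
  simp [Algebra.TensorProduct.tmul_mul_tmul]

theorem antipode_mul' (a b : H) : S (a * b) = S b * S a := by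
  have ra := Coalgebra.Repr.arbitrary k a
  have rb := Coalgebra.Repr.arbitrary k b
  have rra : (i : ra.ι) → Coalgebra.Repr k (ra.right i) (H × H) :=
    fun i => Coalgebra.Repr.arbitrary k _
  have rla : (i : ra.ι) → Coalgebra.Repr k (ra.left i) (H × H) :=
    fun i => Coalgebra.Repr.arbitrary k _
  have rrb : (j : rb.ι) → Coalgebra.Repr k (rb.right j) (H × H) :=
    fun j => Coalgebra.Repr.arbitrary k _
  have rlb : (j : rb.ι) → Coalgebra.Repr k (rb.left j) (H × H) :=
    fun j => Coalgebra.Repr.arbitrary k _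
  set M : H := ∑ i ∈ ra.index, ∑ j ∈ rb.index, ∑ i' ∈ (rra i).index, ∑ j' ∈ (rrb j).index,
      S (ra.left i * rb.left j) * ((rra i).left i' * (rrb j).left j') *
        (S ((rrb j).right j') * S ((rra i).right i')) with hM
  have claimA : M = S (a * b) := by
    have step1 : ∀ i ∈ ra.index, ∀ j ∈ rb.index,
        (∑ i' ∈ (rra i).index, ∑ j' ∈ (rrb j).index,
          S (ra.left i * rb.left j) * ((rra i).left i' * (rrb j).left j') *
            (S ((rrb j).right j') * S ((rra i).right i')))
        = (ε (ra.right i) * ε (rb.right j)) • S (ra.left i * rb.left j) := by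
      intro i _ j _
      have hb' := HopfAlgebra.sum_mul_antipode_eq_smul (rrb j)
      have ha' := HopfAlgebra.sum_mul_antipode_eq_smul (rra i)
      calc
        (∑ i' ∈ (rra i).index, ∑ j' ∈ (rrb j).index,
          S (ra.left i * rb.left j) * ((rra i).left i' * (rrb j).left j') *
            (S ((rrb j).right j') * S ((rra i).right i')))
          = ∑ i' ∈ (rra i).index,
            (S (ra.left i * rb.left j) * (rra i).left i') *
              (∑ j' ∈ (rrb j).index, (rrb j).left j' * S ((rrb j).right j')) *
                S ((rra i).right i') := by
              refine Finset.sum_congr rfl fun i' _ => ?_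
              rw [Finset.mul_sum, Finset.sum_mul]
              exact Finset.sum_congr rfl fun j' _ => by noncomm_ring
        _ = ∑ i' ∈ (rra i).index,
            ε (rb.right j) •
              (S (ra.left i * rb.left j) * ((rra i).left i' * S ((rra i).right i'))) := by
              rw [hb']
              exact Finset.sum_congr rfl fun i' _ => by
                simp [mul_smul_comm, smul_mul_assoc, mul_assoc]
        _ = ε (rb.right j) •
              (S (ra.left i * rb.left j) *
                (∑ i' ∈ (rra i).index, (rra i).left i' * S ((rra i).right i'))) := by
              rw [← Finset.smul_sum, Finset.mul_sum]
        _ = (ε (ra.right i) * ε (rb.right j)) • S (ra.left i * rb.left j) := by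
              rw [ha', mul_smul_comm, mul_one, mul_comm, mul_smul]
    calc M = ∑ i ∈ ra.index, ∑ j ∈ rb.index,
          (ε (ra.right i) * ε (rb.right j)) • S (ra.left i * rb.left j) := by
          rw [hM]
          exact Finset.sum_congr rfl fun i hi => Finset.sum_congr rfl fun j hj => step1 i hi j hj
      _ = S ((∑ i ∈ ra.index, ε (ra.right i) • ra.left i) *
            (∑ j ∈ rb.index, ε (rb.right j) • rb.left j)) := by
          rw [Finset.sum_mul_sum, map_sum]
          refine Finset.sum_congr rfl fun i _ => ?_
          rw [map_sum]
          refine Finset.sum_congr rfl fun j _ => ?_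
          rw [smul_mul_smul_comm, map_smul]
      _ = S (a * b) := by rw [sum_counit_smul_left, sum_counit_smul_left]
  have claimB : M = S b * S a := by
    calc M
        = ∑ j ∈ rb.index, ∑ j' ∈ (rrb j).index, ∑ i ∈ ra.index, ∑ i' ∈ (rra i).index,
            S (ra.left i * rb.left j) * ((rra i).left i' * (rrb j).left j') *
              (S ((rrb j).right j') * S ((rra i).right i')) := by
          rw [hM, Finset.sum_comm]
          refine Finset.sum_congr rfl fun j _ => ?_
          calc ∑ i ∈ ra.index, ∑ i' ∈ (rra i).index, ∑ j' ∈ (rrb j).index,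
                S (ra.left i * rb.left j) * ((rra i).left i' * (rrb j).left j') *
                  (S ((rrb j).right j') * S ((rra i).right i'))
              = ∑ i ∈ ra.index, ∑ j' ∈ (rrb j).index, ∑ i' ∈ (rra i).index,
                S (ra.left i * rb.left j) * ((rra i).left i' * (rrb j).left j') *
                  (S ((rrb j).right j') * S ((rra i).right i')) :=
                Finset.sum_congr rfl fun i _ => Finset.sum_comm
            _ = ∑ j' ∈ (rrb j).index, ∑ i ∈ ra.index, ∑ i' ∈ (rra i).index,
                S (ra.left i * rb.left j) * ((rra i).left i' * (rrb j).left j') *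
                  (S ((rrb j).right j') * S ((rra i).right i')) := Finset.sum_comm
      _ = ∑ j ∈ rb.index, ∑ j' ∈ (rrb j).index, ∑ i ∈ ra.index, ∑ i'' ∈ (rla i).index,
            S ((rla i).left i'' * rb.left j) * ((rla i).right i'' * (rrb j).left j') *
              (S ((rrb j).right j') * S (ra.right i)) := by
          refine Finset.sum_congr rfl fun j _ => Finset.sum_congr rfl fun j' _ => ?_
          have h := sum_mul_mul_assoc
            ((HopfAlgebra.antipode (R := k)).comp (LinearMap.mulRight k (rb.left j)))
            (LinearMap.mulRight k ((rrb j).left j'))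
            ((LinearMap.mulLeft k (S ((rrb j).right j'))).comp (HopfAlgebra.antipode (R := k)))
            ra rla rra
          simpa using h.symm
      _ = ∑ i ∈ ra.index, ∑ i'' ∈ (rla i).index, ∑ j ∈ rb.index, ∑ j' ∈ (rrb j).index,
            S ((rla i).left i'' * rb.left j) * ((rla i).right i'' * (rrb j).left j') *
              (S ((rrb j).right j') * S (ra.right i)) := by
          calc ∑ j ∈ rb.index, ∑ j' ∈ (rrb j).index, ∑ i ∈ ra.index, ∑ i'' ∈ (rla i).index,
                S ((rla i).left i'' * rb.left j) * ((rla i).right i'' * (rrb j).left j') *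
                  (S ((rrb j).right j') * S (ra.right i))
              = ∑ j ∈ rb.index, ∑ i ∈ ra.index, ∑ i'' ∈ (rla i).index, ∑ j' ∈ (rrb j).index,
                S ((rla i).left i'' * rb.left j) * ((rla i).right i'' * (rrb j).left j') *
                  (S ((rrb j).right j') * S (ra.right i)) := by
                refine Finset.sum_congr rfl fun j _ => ?_
                rw [Finset.sum_comm]
                exact Finset.sum_congr rfl fun i _ => Finset.sum_comm
            _ = ∑ i ∈ ra.index, ∑ j ∈ rb.index, ∑ i'' ∈ (rla i).index, ∑ j' ∈ (rrb j).index,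
                S ((rla i).left i'' * rb.left j) * ((rla i).right i'' * (rrb j).left j') *
                  (S ((rrb j).right j') * S (ra.right i)) := Finset.sum_comm
            _ = ∑ i ∈ ra.index, ∑ i'' ∈ (rla i).index, ∑ j ∈ rb.index, ∑ j' ∈ (rrb j).index,
                S ((rla i).left i'' * rb.left j) * ((rla i).right i'' * (rrb j).left j') *
                  (S ((rrb j).right j') * S (ra.right i)) :=
                Finset.sum_congr rfl fun i _ => Finset.sum_comm
      _ = ∑ i ∈ ra.index, ∑ i'' ∈ (rla i).index, ∑ j ∈ rb.index, ∑ j'' ∈ (rlb j).index,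
            S ((rla i).left i'' * (rlb j).left j'') * ((rla i).right i'' * (rlb j).right j'') *
              (S (rb.right j) * S (ra.right i)) := by
          refine Finset.sum_congr rfl fun i _ => Finset.sum_congr rfl fun i'' _ => ?_
          have h := sum_mul_mul_assoc
            ((HopfAlgebra.antipode (R := k)).comp (LinearMap.mulLeft k ((rla i).left i'')))
            (LinearMap.mulLeft k ((rla i).right i''))
            ((LinearMap.mulRight k (S (ra.right i))).comp (HopfAlgebra.antipode (R := k)))
            rb rlb rrb
          simpa using h.symm
      _ = ∑ i ∈ ra.index, ∑ j ∈ rb.index, ∑ i'' ∈ (rla i).index, ∑ j'' ∈ (rlb j).index,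
            S ((rla i).left i'' * (rlb j).left j'') * ((rla i).right i'' * (rlb j).right j'') *
              (S (rb.right j) * S (ra.right i)) := by
          refine Finset.sum_congr rfl fun i _ => ?_
          exact Finset.sum_comm
      _ = ∑ i ∈ ra.index, ∑ j ∈ rb.index,
            ε (ra.left i * rb.left j) • (S (rb.right j) * S (ra.right i)) := by
          refine Finset.sum_congr rfl fun i _ => Finset.sum_congr rfl fun j _ => ?_
          calc ∑ i'' ∈ (rla i).index, ∑ j'' ∈ (rlb j).index,
                S ((rla i).left i'' * (rlb j).left j'') *
                  ((rla i).right i'' * (rlb j).right j'') *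
                    (S (rb.right j) * S (ra.right i))
              = (∑ i'' ∈ (rla i).index, ∑ j'' ∈ (rlb j).index,
                  S ((rla i).left i'' * (rlb j).left j'') *
                    ((rla i).right i'' * (rlb j).right j'')) *
                      (S (rb.right j) * S (ra.right i)) := by
                rw [Finset.sum_mul]
                exact Finset.sum_congr rfl fun i'' _ => (Finset.sum_mul _ _ _).symm
            _ = ε (ra.left i * rb.left j) • (S (rb.right j) * S (ra.right i)) := by
                rw [sum_S_mul_mul (rla i) (rlb j), smul_mul_assoc, one_mul]
      _ = (∑ j ∈ rb.index, ε (rb.left j) • S (rb.right j)) *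
            (∑ i ∈ ra.index, ε (ra.left i) • S (ra.right i)) := by
          rw [Finset.sum_mul_sum, Finset.sum_comm]
          refine Finset.sum_congr rfl fun i _ => Finset.sum_congr rfl fun j _ => ?_
          rw [Bialgebra.counit_mul, smul_mul_smul_comm, mul_comm, mul_smul]
      _ = S (∑ j ∈ rb.index, ε (rb.left j) • rb.right j) *
            S (∑ i ∈ ra.index, ε (ra.left i) • ra.right i) := by
          rw [map_sum, map_sum]
          simp only [map_smul]
      _ = S b * S a := by rw [sum_counit_smul_right, sum_counit_smul_right]
  rw [← claimA, claimB]

end Aux3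
section Aux4
variable {k H : Type*} [Field k] [Ring H] [HopfAlgebra k H]

local notation "S" => HopfAlgebra.antipode (R := k) (A := H)
local notation "ε" => Coalgebra.counit (R := k) (A := H)

open Coalgebra

/-- uniqueness of two-sided inverses in matrix form -/
lemma matinv_unique {M : Type*} [Ring M] {N : ℕ} (A U V : Fin N → Fin N → M)
    (hUA : ∀ i j, ∑ p, U i p * A p j = if i = j then 1 else 0)
    (hAV : ∀ i j, ∑ p, A i p * V p j = if i = j then 1 else 0) :
    ∀ i j, U i j = V i j := by
  intro i j
  calc U i j = ∑ p, U i p * (if p = j then 1 else 0) := by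
        simp
    _ = ∑ p, U i p * (∑ q, A p q * V q j) := by
        refine Finset.sum_congr rfl fun p _ => ?_; rw [hAV]
    _ = ∑ q, (∑ p, U i p * A p q) * V q j := by
        simp only [Finset.mul_sum, Finset.sum_mul, mul_assoc]
        exact Finset.sum_comm
    _ = ∑ q, (if i = q then 1 else 0) * V q j := by
        refine Finset.sum_congr rfl fun q _ => ?_; rw [hUA]
    _ = V i j := by simp

variable {N : ℕ} {x : Fin N → Fin N → H}

section fam
variable (hΔ : ∀ i j, Coalgebra.comul (R := k) (x i j) = ∑ p, x i p ⊗ₜ[k] x p j)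
  (hε : ∀ i j, Coalgebra.counit (R := k) (x i j) = if i = j then (1 : k) else 0)

include hΔ hε

lemma fam_S_mul (i j : Fin N) :
    ∑ p, S (x i p) * x p j = if i = j then (1 : H) else 0 := by
  have h := sum_S_mul_of_eq (k := k) (x i j) Finset.univ _ _ (hΔ i j).symm
  rw [hε] at h
  simpa [ite_smul] using h

lemma fam_mul_S (i j : Fin N) :
    ∑ p, x i p * S (x p j) = if i = j then (1 : H) else 0 := by
  have h := sum_mul_S_of_eq (k := k) (x i j) Finset.univ _ _ (hΔ i j).symm
  rw [hε] at h
  simpa [ite_smul] using h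

lemma fam_counit_S (i j : Fin N) :
    Coalgebra.counit (R := k) (S (x i j)) = if i = j then (1 : k) else 0 := by
  have h := congrArg (Coalgebra.counit (R := k)) (fam_S_mul hΔ hε i j)
  rw [map_sum] at h
  simp only [Bialgebra.counit_mul, hε, mul_ite, mul_one, mul_zero] at h
  simpa [Finset.sum_ite_eq', apply_ite (Coalgebra.counit (R := k))] using h

lemma fam_comul_S (i j : Fin N) :
    Coalgebra.comul (R := k) (S (x i j)) = ∑ p, S (x p j) ⊗ₜ[k] S (x i p) := by
  refine matinv_unique (M := H ⊗[k] H)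
    (fun i j => Coalgebra.comul (R := k) (x i j))
    (fun i j => Coalgebra.comul (R := k) (S (x i j)))
    (fun i j => ∑ p, S (x p j) ⊗ₜ[k] S (x i p)) ?_ ?_ i j
  · intro i j
    have h := congrArg (Coalgebra.comul (R := k)) (fam_S_mul hΔ hε i j)
    rw [map_sum] at h
    simp only [Bialgebra.comul_mul] at h
    rw [h]
    split <;> simp
  · intro i j
    calc ∑ p, Coalgebra.comul (R := k) (x i p) * (∑ q, S (x q j) ⊗ₜ[k] S (x p q))
        = ∑ p, ∑ r, ∑ q, (x i r * S (x q j)) ⊗ₜ[k] (x r p * S (x p q)) := by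
          refine Finset.sum_congr rfl fun p _ => ?_
          rw [hΔ, Finset.sum_mul_sum]
          simp [Algebra.TensorProduct.tmul_mul_tmul]
      _ = ∑ r, ∑ q, (x i r * S (x q j)) ⊗ₜ[k] (∑ p, x r p * S (x p q)) := by
          rw [Finset.sum_comm]
          refine Finset.sum_congr rfl fun r _ => ?_
          rw [Finset.sum_comm]
          refine Finset.sum_congr rfl fun q _ => ?_
          rw [TensorProduct.tmul_sum]
      _ = ∑ r, (x i r * S (x r j)) ⊗ₜ[k] (1 : H) := by
          refine Finset.sum_congr rfl fun r _ => ?_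
          rw [Finset.sum_eq_single r (fun q _ hq => by rw [fam_mul_S hΔ hε]; simp [Ne.symm hq]) (by simp)]
          rw [fam_mul_S hΔ hε]; simp
      _ = if i = j then 1 else 0 := by
          rw [← TensorProduct.sum_tmul, fam_mul_S hΔ hε]
          split <;> simp [Algebra.TensorProduct.one_def]

end fam
end Aux4
section Aux5
variable {k H : Type*} [Field k] [Ring H] [HopfAlgebra k H]

local notation "S" => HopfAlgebra.antipode (R := k) (A := H)

open Coalgebra

variable (σinv : H →ₗ[k] H)
  (hσ1 : ∀ x : H, σinv (HopfAlgebra.antipode (R := k) x) = x)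
  (hσ2 : ∀ x : H, HopfAlgebra.antipode (R := k) (σinv x) = x)
variable {N : ℕ} {x : Fin N → Fin N → H}
  (hΔ : ∀ i j, Coalgebra.comul (R := k) (x i j) = ∑ p, x i p ⊗ₜ[k] x p j)
  (hε : ∀ i j, Coalgebra.counit (R := k) (x i j) = if i = j then (1 : k) else 0)

include hσ1 hσ2 hΔ hε

lemma fam_Sinv_mul (i j : Fin N) :
    ∑ p, σinv (x p j) * x i p = if i = j then (1 : H) else 0 := by
  have hinj : Function.Injective (S) := fun u v h => by
    have := congrArg σinv h; rwa [hσ1, hσ1] at this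
  apply hinj
  rw [map_sum]
  calc ∑ p, S (σinv (x p j) * x i p)
      = ∑ p, S (x i p) * x p j := by
        refine Finset.sum_congr rfl fun p _ => ?_
        rw [antipode_mul', hσ2]
    _ = if i = j then 1 else 0 := fam_S_mul hΔ hε i j
    _ = S (if i = j then (1 : H) else 0) := by split <;> simp [S_one (k := k)]

lemma fam_mul_Sinv (i j : Fin N) :
    ∑ p, x p j * σinv (x i p) = if i = j then (1 : H) else 0 := by
  have hinj : Function.Injective (S) := fun u v h => by
    have := congrArg σinv h; rwa [hσ1, hσ1] at this
  apply hinj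
  rw [map_sum]
  calc ∑ p, S (x p j * σinv (x i p))
      = ∑ p, x i p * S (x p j) := by
        refine Finset.sum_congr rfl fun p _ => ?_
        rw [antipode_mul', hσ2]
    _ = if i = j then 1 else 0 := fam_mul_S hΔ hε i j
    _ = S (if i = j then (1 : H) else 0) := by split <;> simp [S_one (k := k)]

lemma fam_comul_Sinv (i j : Fin N) :
    Coalgebra.comul (R := k) (σinv (x i j)) = ∑ p, σinv (x p j) ⊗ₜ[k] σinv (x i p) := by
  refine matinv_unique (M := H ⊗[k] H)
    (fun a b => Coalgebra.comul (R := k) (x b a))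
    (fun a b => Coalgebra.comul (R := k) (σinv (x b a)))
    (fun a b => ∑ p, σinv (x p a) ⊗ₜ[k] σinv (x b p)) ?_ ?_ j i
  · intro a b
    have h : ∑ p, σinv (x p a) * x b p = if a = b then (1 : H) else 0 := by
      rw [fam_Sinv_mul σinv hσ1 hσ2 hΔ hε b a]
      simp [eq_comm]
    have h2 := congrArg (Coalgebra.comul (R := k)) h
    rw [map_sum] at h2
    simp only [Bialgebra.comul_mul] at h2
    rw [h2]
    split <;> simp
  · intro a b
    calc ∑ p, Coalgebra.comul (R := k) (x p a) * (∑ r, σinv (x r p) ⊗ₜ[k] σinv (x b r))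
        = ∑ p, ∑ q, ∑ r, (x p q * σinv (x r p)) ⊗ₜ[k] (x q a * σinv (x b r)) := by
          refine Finset.sum_congr rfl fun p _ => ?_
          rw [hΔ, Finset.sum_mul_sum]
          simp [Algebra.TensorProduct.tmul_mul_tmul]
      _ = ∑ q, ∑ r, (∑ p, x p q * σinv (x r p)) ⊗ₜ[k] (x q a * σinv (x b r)) := by
          rw [Finset.sum_comm]
          refine Finset.sum_congr rfl fun q _ => ?_
          rw [Finset.sum_comm]
          refine Finset.sum_congr rfl fun r _ => ?_
          rw [TensorProduct.sum_tmul]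
      _ = ∑ q, (1 : H) ⊗ₜ[k] (x q a * σinv (x b q)) := by
          refine Finset.sum_congr rfl fun q _ => ?_
          rw [Finset.sum_eq_single q
            (fun r _ hr => by
              rw [fam_mul_Sinv σinv hσ1 hσ2 hΔ hε]; simp [hr]) (by simp)]
          rw [fam_mul_Sinv σinv hσ1 hσ2 hΔ hε]; simp
      _ = if a = b then 1 else 0 := by
          rw [← TensorProduct.tmul_sum, fam_mul_Sinv σinv hσ1 hσ2 hΔ hε]
          have : (if b = a then (1:H) else 0) = if a = b then 1 else 0 := by simp [eq_comm]
          rw [this]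
          split <;> simp [Algebra.TensorProduct.one_def]

end Aux5

section Aux6
variable {k H : Type*} [Field k] [Ring H] [HopfAlgebra k H]
local notation "S" => HopfAlgebra.antipode (R := k) (A := H)
open Coalgebra
variable {N : ℕ} {x : Fin N → Fin N → H}
  (hΔ : ∀ i j, Coalgebra.comul (R := k) (x i j) = ∑ p, x i p ⊗ₜ[k] x p j)
  (hε : ∀ i j, Coalgebra.counit (R := k) (x i j) = if i = j then (1 : k) else 0)
include hΔ hε

lemma fam_S_S_mul (i j : Fin N) :
    ∑ p, S (S (x p j)) * S (x i p) = if i = j then (1 : H) else 0 := by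
  have h := sum_S_mul_of_eq (k := k) (S (x i j)) Finset.univ
    (fun p => S (x p j)) (fun p => S (x i p)) (fam_comul_S hΔ hε i j).symm
  rw [fam_counit_S hΔ hε] at h
  simpa [ite_smul] using h

end Aux6
section Aux7
variable {M : Type*} [AddCommMonoid M]

lemma sum4_rotate {α β γ δ : Type*} (s1 : Finset α) (s2 : Finset β) (s3 : Finset γ)
    (s4 : Finset δ) (g : α → β → γ → δ → M) :
    ∑ p ∈ s1, ∑ a ∈ s2, ∑ b ∈ s3, ∑ c ∈ s4, g p a b c
      = ∑ a ∈ s2, ∑ b ∈ s3, ∑ c ∈ s4, ∑ p ∈ s1, g p a b c := by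
  rw [Finset.sum_comm]
  refine Finset.sum_congr rfl fun a _ => ?_
  rw [Finset.sum_comm]
  exact Finset.sum_congr rfl fun b _ => Finset.sum_comm

lemma sum4_swap {α β γ δ : Type*} (s1 : Finset α) (s2 : Finset β) (s3 : Finset γ)
    (s4 : Finset δ) (g : α → β → γ → δ → M) :
    ∑ p ∈ s1, ∑ q ∈ s2, ∑ r ∈ s3, ∑ s ∈ s4, g p q r s
      = ∑ r ∈ s3, ∑ s ∈ s4, ∑ p ∈ s1, ∑ q ∈ s2, g p q r s := by
  calc ∑ p ∈ s1, ∑ q ∈ s2, ∑ r ∈ s3, ∑ s ∈ s4, g p q r s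
      = ∑ q ∈ s2, ∑ r ∈ s3, ∑ s ∈ s4, ∑ p ∈ s1, g p q r s := sum4_rotate _ _ _ _ _
    _ = ∑ r ∈ s3, ∑ s ∈ s4, ∑ p ∈ s1, ∑ q ∈ s2, g p q r s :=
        sum4_rotate s2 s3 s4 s1 (fun q r s p => g p q r s)

end Aux7

/-- Central elements of a left coideal subalgebra lying in the span of an `l`-functional
family yield solutions of the reflection equation (abstract form of the paper's
Proposition 3.1).  Here `ℓ i j`, `ℓp i j`, `ℓm i j` play the roles of `l(cⁱⱼ)`,
`l⁺(cⁱⱼ)`, `l⁻(cⁱⱼ)`, and `Rm i j i' j'`, `Rtm i j i' j'` denote `R^{ij}_{i'j'}`,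
`R̃^{ij}_{i'j'}`.  If `C = Σ J^j_i ℓ(i,j)` lies in the left coideal subalgebra `B` and is
`ad_r(B)`-invariant, then `J` satisfies the reflection equation
`J₁ R̃ J₂ R = R₂₁ J₂ R̃₂₁ J₁`, written out entrywise. -/
theorem reflection_equation_of_central
    (k H : Type*) [Field k] [Ring H] [HopfAlgebra k H]
    (σinv : H →ₗ[k] H)
    (hσ1 : ∀ x : H, σinv (HopfAlgebra.antipode (R := k) x) = x)
    (hσ2 : ∀ x : H, HopfAlgebra.antipode (R := k) (σinv x) = x)
    (B : Subalgebra k H)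
    (hB : ∀ b ∈ B, Coalgebra.comul (R := k) b ∈
      Submodule.span k {t : H ⊗[k] H | ∃ (h : H) (y : H), y ∈ B ∧ t = h ⊗ₜ[k] y})
    (N : ℕ) (hN : 1 ≤ N)
    (ℓ ℓp ℓm : Fin N → Fin N → H)
    (Rm Rtm : Fin N → Fin N → Fin N → Fin N → k)
    -- (a) linear independence of the ℓ(i,j)
    (hlin : LinearIndependent k fun p : Fin N × Fin N => ℓ p.1 p.2)
    -- (b) coproduct of ℓ:  Δℓ(i,j) = Σ_{m,n} ℓ(m,n) ⊗ σ(ℓ⁻(i,m))·ℓ⁺(n,j)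
    (hΔℓ : ∀ i j, Coalgebra.comul (R := k) (ℓ i j) =
      ∑ m, ∑ n, ℓ m n ⊗ₜ[k]
        (HopfAlgebra.antipode (R := k) (ℓm i m) * ℓp n j))
    -- (c) coproducts and counits of ℓ⁺, ℓ⁻
    (hΔp : ∀ i j, Coalgebra.comul (R := k) (ℓp i j) = ∑ m, ℓp i m ⊗ₜ[k] ℓp m j)
    (hΔm : ∀ i j, Coalgebra.comul (R := k) (ℓm i j) = ∑ m, ℓm i m ⊗ₜ[k] ℓm m j)
    (hεp : ∀ i j, Coalgebra.counit (R := k) (ℓp i j) = if i = j then (1 : k) else 0)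
    (hεm : ∀ i j, Coalgebra.counit (R := k) (ℓm i j) = if i = j then (1 : k) else 0)
    -- (d) action of ad_r σ(ℓ⁻(i,m)) on ℓ(k,j)
    (hd : ∀ i m i' j, adR k (HopfAlgebra.antipode (R := k) (ℓm i m)) (ℓ i' j) =
      ∑ a, ∑ b, ∑ l, (Rm l i' m a * Rtm i b l j) • ℓ a b)
    -- (e) action of ad_r σ⁻¹(ℓ⁺(n,i)) on ℓ(k,j)
    (he : ∀ n i i' j, adR k (σinv (ℓp n i)) (ℓ i' j) =
      ∑ a, ∑ b, ∑ l, (Rm b n j l * Rtm i' l a i) • ℓ a b)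
    (J : Fin N → Fin N → k)
    -- C = Σ_{i,j} J^j_i ℓ(i,j) belongs to B and is ad_r(B)-invariant
    (hCB : (∑ i, ∑ j, J j i • ℓ i j) ∈ B)
    (hCinv : ∀ b ∈ B, adR k b (∑ i, ∑ j, J j i • ℓ i j) =
      Coalgebra.counit (R := k) b • ∑ i, ∑ j, J j i • ℓ i j) :
    ∀ a b m n : Fin N,
      ∑ i, ∑ j, ∑ i', ∑ l, J n i * Rtm i b l j * J j i' * Rm l i' m a
        = ∑ i, ∑ j, ∑ i', ∑ l, Rm b n j l * J j i' * Rtm i' l a i * J i m := by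
  intro a b m n
  set C : H := ∑ i, ∑ j, J j i • ℓ i j with hC
  set X : Fin N → Fin N → Fin N → Fin N → H :=
    fun m' n' p q => HopfAlgebra.antipode (R := k) (ℓm p m') * ℓp n' q with hX
  set bb : Fin N → Fin N → H := fun p q => ∑ i, ∑ j, J j i • X p q i j with hbb
  clear_value C X bb
  -- family facts
  have hεSm : ∀ i j, Coalgebra.counit (R := k) (HopfAlgebra.antipode (R := k) (ℓm i j))
      = if i = j then (1 : k) else 0 := fam_counit_S hΔm hεm
  have hCSm : ∀ i j, Coalgebra.comul (R := k) (HopfAlgebra.antipode (R := k) (ℓm i j))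
      = ∑ p, HopfAlgebra.antipode (R := k) (ℓm p j) ⊗ₜ[k]
          HopfAlgebra.antipode (R := k) (ℓm i p) := fam_comul_S hΔm hεm
  have hB1 : ∀ i j, ∑ p, HopfAlgebra.antipode (R := k)
        (HopfAlgebra.antipode (R := k) (ℓm p j)) *
        HopfAlgebra.antipode (R := k) (ℓm i p) = if i = j then (1 : H) else 0 :=
    fam_S_S_mul hΔm hεm
  have hA4p : ∀ i j, ∑ p, ℓp p j * σinv (ℓp i p) = if i = j then (1 : H) else 0 :=
    fam_mul_Sinv σinv hσ1 hσ2 hΔp hεp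
  have hCS'p : ∀ i j, Coalgebra.comul (R := k) (σinv (ℓp i j))
      = ∑ p, σinv (ℓp p j) ⊗ₜ[k] σinv (ℓp i p) := fam_comul_Sinv σinv hσ1 hσ2 hΔp hεp
  -- counit and comul of the X family
  have hεX : ∀ m' n' r s, Coalgebra.counit (R := k) (X m' n' r s)
      = (if r = m' then (1 : k) else 0) * (if n' = s then 1 else 0) := by
    intro m' n' r s
    simp only [hX, Bialgebra.counit_mul, hεSm, hεp]
  have hΔX : ∀ m' n' r s, Coalgebra.comul (R := k) (X m' n' r s)
      = ∑ p, ∑ q, X m' n' p q ⊗ₜ[k] X p q r s := by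
    intro m' n' r s
    simp only [hX]
    rw [Bialgebra.comul_mul, hCSm, hΔp, Finset.sum_mul_sum]
    refine Finset.sum_congr rfl fun p _ => Finset.sum_congr rfl fun q _ => ?_
    rw [Algebra.TensorProduct.tmul_mul_tmul]
  -- comul of bb
  have hΔbb : ∀ p q, Coalgebra.comul (R := k) (bb p q)
      = ∑ r, ∑ s, X p q r s ⊗ₜ[k] bb r s := by
    intro p q
    calc Coalgebra.comul (R := k) (bb p q)
        = ∑ i, ∑ j, ∑ r, ∑ s, J j i • (X p q r s ⊗ₜ[k] X r s i j) := by
          simp only [hbb]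
          rw [map_sum]
          refine Finset.sum_congr rfl fun i _ => ?_
          rw [map_sum]
          refine Finset.sum_congr rfl fun j _ => ?_
          rw [map_smul, hΔX, Finset.smul_sum]
          exact Finset.sum_congr rfl fun r _ => Finset.smul_sum
      _ = ∑ r, ∑ s, ∑ i, ∑ j, X p q r s ⊗ₜ[k] (J j i • X r s i j) := by
          rw [sum4_swap]
          simp only [TensorProduct.tmul_smul]
      _ = ∑ r, ∑ s, X p q r s ⊗ₜ[k] bb r s := by
          simp only [hbb, TensorProduct.tmul_sum]
  -- comul of C
  have hΔC : Coalgebra.comul (R := k) C = ∑ m', ∑ n', ℓ m' n' ⊗ₜ[k] bb m' n' := by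
    calc Coalgebra.comul (R := k) C
        = ∑ i, ∑ j, ∑ m', ∑ n', J j i • (ℓ m' n' ⊗ₜ[k] X m' n' i j) := by
          rw [hC, map_sum]
          refine Finset.sum_congr rfl fun i _ => ?_
          rw [map_sum]
          refine Finset.sum_congr rfl fun j _ => ?_
          rw [map_smul, hΔℓ]
          simp only [Finset.smul_sum]
          simp only [hX]
      _ = ∑ m', ∑ n', ∑ i, ∑ j, ℓ m' n' ⊗ₜ[k] (J j i • X m' n' i j) := by
          rw [sum4_swap]
          simp only [TensorProduct.tmul_smul]
      _ = ∑ m', ∑ n', ℓ m' n' ⊗ₜ[k] bb m' n' := by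
          simp only [hbb, TensorProduct.tmul_sum]
  -- dual functionals
  have hfex : ∀ p : Fin N × Fin N, ∃ g : H →ₗ[k] k,
      ∀ q : Fin N × Fin N, g (ℓ q.1 q.2) = if q = p then 1 else 0 := by
    intro p
    obtain ⟨g, hg⟩ := LinearMap.exists_extend ((Module.Basis.span hlin).coord p)
    refine ⟨g, fun q => ?_⟩
    have h1 : ℓ q.1 q.2
        = (Submodule.span k (Set.range fun p : Fin N × Fin N => ℓ p.1 p.2)).subtype
            (Module.Basis.span hlin q) := by
      rw [Submodule.coe_subtype, Module.Basis.span_apply]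
    rw [h1, ← LinearMap.comp_apply, hg]
    simp [Module.Basis.coord_apply, Finsupp.single_apply]
  choose f hf using hfex
  -- bb lands in B
  have hbbB : ∀ p q, bb p q ∈ B := by
    intro p q
    set Φ : H ⊗[k] H →ₗ[k] H :=
      TensorProduct.lift ((LinearMap.lsmul k H).comp (f (p, q))) with hΦdef
    have hΦ : ∀ (x y : H), Φ (x ⊗ₜ[k] y) = f (p, q) x • y := fun x y => by
      simp [hΦdef, TensorProduct.lift.tmul]
    have hle : Submodule.span k {t : H ⊗[k] H | ∃ (h' : H) (y : H), y ∈ B ∧ t = h' ⊗ₜ[k] y}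
        ≤ (Subalgebra.toSubmodule B).comap Φ := by
      rw [Submodule.span_le]
      rintro t ⟨h', y, hy, rfl⟩
      simp only [SetLike.mem_coe, Submodule.mem_comap, hΦ, Subalgebra.mem_toSubmodule]
      exact Subalgebra.smul_mem B hy _
    have hmem := hle (hB C hCB)
    simp only [Submodule.mem_comap, Subalgebra.mem_toSubmodule] at hmem
    have heval : Φ (Coalgebra.comul (R := k) C) = bb p q := by
      rw [hΔC, map_sum]
      have : ∀ m', Φ (∑ n', ℓ m' n' ⊗ₜ[k] bb m' n')
          = ∑ n', (if (m', n') = (p, q) then (1 : k) else 0) • bb m' n' := by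
        intro m'
        rw [map_sum]
        refine Finset.sum_congr rfl fun n' _ => ?_
        rw [hΦ, hf (p, q) (m', n')]
      simp only [this]
      simp [Prod.mk.injEq, ite_and, Finset.sum_ite_eq, ite_smul]
    rwa [heval] at hmem
  have hεbb : ∀ p q, Coalgebra.counit (R := k) (bb p q) = J q p := by
    intro p q
    simp only [hbb, map_sum, map_smul, hεX, smul_eq_mul]
    simp [Finset.sum_ite_eq, Finset.sum_ite_eq', mul_ite, mul_one, mul_zero]
  have hKEY1 : ∀ m' n' r s, ∑ p, ∑ q, X m' n' p q *
      HopfAlgebra.antipode (R := k) (X p q r s)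
      = ((if r = m' then (1 : k) else 0) * (if n' = s then 1 else 0)) • (1 : H) := by
    intro m' n' r s
    have h := sum_mul_S_of_eq (k := k) (X m' n' r s) (Finset.univ ×ˢ Finset.univ)
      (fun t => X m' n' t.1 t.2) (fun t => X t.1 t.2 r s) (by
        rw [hΔX]
        exact Finset.sum_product' Finset.univ Finset.univ fun p' q' => X m' n' p' q' ⊗ₜ[k] X p' q' r s)
    rw [hεX] at h
    rw [← Finset.sum_product']
    exact h
  have hadRbb : ∀ p q (u : H), adR k (bb p q) u
      = ∑ r, ∑ s, HopfAlgebra.antipode (R := k) (X p q r s) * (u * bb r s) := by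
    intro p q u
    have h := adR_apply_of_eq (k := k) (bb p q) u (Finset.univ ×ˢ Finset.univ)
      (fun t => X p q t.1 t.2) (fun t => bb t.1 t.2) (by
        rw [hΔbb]
        exact Finset.sum_product' Finset.univ Finset.univ fun r' s' => X p q r' s' ⊗ₜ[k] bb r' s')
    rw [h, Finset.sum_product]
  have centr : ∀ m' n', C * bb m' n' = bb m' n' * C := by
    intro m' n'
    have T1 : ∑ p, ∑ q, X m' n' p q * adR k (bb p q) C = bb m' n' * C := by
      calc ∑ p, ∑ q, X m' n' p q * adR k (bb p q) C
          = ∑ p, ∑ q, J q p • X m' n' p q * C := by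
            refine Finset.sum_congr rfl fun p _ => Finset.sum_congr rfl fun q _ => ?_
            rw [hCinv (bb p q) (hbbB p q), hεbb, mul_smul_comm, smul_mul_assoc]
        _ = bb m' n' * C := by
            simp only [hbb]
            rw [Finset.sum_mul]
            exact Finset.sum_congr rfl fun p _ => (Finset.sum_mul _ _ _).symm
    have T2 : ∑ p, ∑ q, X m' n' p q * adR k (bb p q) C = C * bb m' n' := by
      calc ∑ p, ∑ q, X m' n' p q * adR k (bb p q) C
          = ∑ p, ∑ q, ∑ r, ∑ s, X m' n' p q *
              (HopfAlgebra.antipode (R := k) (X p q r s) * (C * bb r s)) := by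
            refine Finset.sum_congr rfl fun p _ => Finset.sum_congr rfl fun q _ => ?_
            rw [hadRbb, Finset.mul_sum]
            exact Finset.sum_congr rfl fun r _ => Finset.mul_sum _ _ _
        _ = ∑ r, ∑ s, (∑ p, ∑ q, X m' n' p q *
              HopfAlgebra.antipode (R := k) (X p q r s)) * (C * bb r s) := by
            rw [sum4_swap]
            refine Finset.sum_congr rfl fun r _ => Finset.sum_congr rfl fun s _ => ?_
            rw [Finset.sum_mul]
            refine Finset.sum_congr rfl fun p _ => ?_
            rw [Finset.sum_mul]
            exact Finset.sum_congr rfl fun q _ => (mul_assoc _ _ _).symm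
        _ = ∑ r, ∑ s, (((if r = m' then (1 : k) else 0) * (if n' = s then 1 else 0)) •
              (1 : H)) * (C * bb r s) := by
            refine Finset.sum_congr rfl fun r _ => Finset.sum_congr rfl fun s _ => ?_
            rw [hKEY1]
        _ = C * bb m' n' := by
            simp [smul_mul_assoc, ite_mul, ite_smul, Finset.sum_ite_eq, Finset.sum_ite_eq']
    rw [← T2, T1]
  have hadR1 : ∀ i m', adR k (HopfAlgebra.antipode (R := k) (ℓm i m')) C
      = ∑ p, HopfAlgebra.antipode (R := k) (HopfAlgebra.antipode (R := k) (ℓm p m')) *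
          (C * HopfAlgebra.antipode (R := k) (ℓm i p)) := by
    intro i m'
    exact adR_apply_of_eq (k := k) _ C Finset.univ _ _ (hCSm i m').symm
  have hadR2 : ∀ n' i, adR k (σinv (ℓp n' i)) C
      = ∑ p, ℓp p i * (C * σinv (ℓp n' p)) := by
    intro n' i
    rw [adR_apply_of_eq (k := k) _ C Finset.univ _ _ (hCS'p n' i).symm]
    simp only [hσ2]
  have hdd : ∀ m' n', ∑ i, J n' i • (C * HopfAlgebra.antipode (R := k) (ℓm i m'))
      = ∑ n'', ∑ i, ∑ j, J j i •
          (HopfAlgebra.antipode (R := k) (ℓm i m') * ℓp n'' j * (C * σinv (ℓp n' n''))) := by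
    intro m' n'
    have h1 : ∑ n'', (C * bb m' n'') * σinv (ℓp n' n'')
        = ∑ n'', (bb m' n'' * C) * σinv (ℓp n' n'') :=
      Finset.sum_congr rfl fun n'' _ => by rw [centr]
    have hL : ∑ n'', (C * bb m' n'') * σinv (ℓp n' n'')
        = ∑ i, J n' i • (C * HopfAlgebra.antipode (R := k) (ℓm i m')) := by
      calc ∑ n'', (C * bb m' n'') * σinv (ℓp n' n'')
          = ∑ n'', ∑ i, ∑ j, J j i • ((C * HopfAlgebra.antipode (R := k) (ℓm i m')) *
              (ℓp n'' j * σinv (ℓp n' n''))) := by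
            refine Finset.sum_congr rfl fun n'' _ => ?_
            simp only [hbb, hX]
            rw [Finset.mul_sum, Finset.sum_mul]
            refine Finset.sum_congr rfl fun i _ => ?_
            rw [Finset.mul_sum, Finset.sum_mul]
            refine Finset.sum_congr rfl fun j _ => ?_
            rw [mul_smul_comm, smul_mul_assoc]
            congr 1
            noncomm_ring
        _ = ∑ i, ∑ j, J j i • ((C * HopfAlgebra.antipode (R := k) (ℓm i m')) *
              (∑ n'', ℓp n'' j * σinv (ℓp n' n''))) := by
            rw [Finset.sum_comm]
            refine Finset.sum_congr rfl fun i _ => ?_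
            rw [Finset.sum_comm]
            refine Finset.sum_congr rfl fun j _ => ?_
            rw [← Finset.smul_sum, ← Finset.mul_sum]
        _ = ∑ i, J n' i • (C * HopfAlgebra.antipode (R := k) (ℓm i m')) := by
            refine Finset.sum_congr rfl fun i _ => ?_
            simp [hA4p, mul_ite, mul_one, mul_zero, ite_smul, Finset.sum_ite_eq]
    have hR : ∑ n'', (bb m' n'' * C) * σinv (ℓp n' n'')
        = ∑ n'', ∑ i, ∑ j, J j i •
            (HopfAlgebra.antipode (R := k) (ℓm i m') * ℓp n'' j * (C * σinv (ℓp n' n''))) := by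
      refine Finset.sum_congr rfl fun n'' _ => ?_
      simp only [hbb, hX]
      rw [Finset.sum_mul, Finset.sum_mul]
      refine Finset.sum_congr rfl fun i _ => ?_
      rw [Finset.sum_mul, Finset.sum_mul]
      refine Finset.sum_congr rfl fun j _ => ?_
      rw [smul_mul_assoc, smul_mul_assoc]
      congr 1
      noncomm_ring
    rw [← hL, h1, hR]
  have hkey : ∀ m' n', ∑ i, J n' i • adR k (HopfAlgebra.antipode (R := k) (ℓm i m')) C
      = ∑ i, J i m' • adR k (σinv (ℓp n' i)) C := by
    intro m' n'
    have h2 : ∑ p', HopfAlgebra.antipode (R := k) (HopfAlgebra.antipode (R := k) (ℓm p' m')) *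
        (∑ i, J n' i • (C * HopfAlgebra.antipode (R := k) (ℓm i p')))
        = ∑ p', HopfAlgebra.antipode (R := k) (HopfAlgebra.antipode (R := k) (ℓm p' m')) *
          (∑ n'', ∑ i, ∑ j, J j i • (HopfAlgebra.antipode (R := k) (ℓm i p') * ℓp n'' j *
            (C * σinv (ℓp n' n'')))) :=
      Finset.sum_congr rfl fun p' _ => by rw [hdd p' n']
    have hL : ∑ p', HopfAlgebra.antipode (R := k) (HopfAlgebra.antipode (R := k) (ℓm p' m')) *
        (∑ i, J n' i • (C * HopfAlgebra.antipode (R := k) (ℓm i p')))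
        = ∑ i, J n' i • adR k (HopfAlgebra.antipode (R := k) (ℓm i m')) C := by
      calc ∑ p', HopfAlgebra.antipode (R := k) (HopfAlgebra.antipode (R := k) (ℓm p' m')) *
            (∑ i, J n' i • (C * HopfAlgebra.antipode (R := k) (ℓm i p')))
          = ∑ p', ∑ i, J n' i •
              (HopfAlgebra.antipode (R := k) (HopfAlgebra.antipode (R := k) (ℓm p' m')) *
                (C * HopfAlgebra.antipode (R := k) (ℓm i p'))) := by
            refine Finset.sum_congr rfl fun p' _ => ?_
            rw [Finset.mul_sum]
            exact Finset.sum_congr rfl fun i _ => mul_smul_comm _ _ _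
        _ = ∑ i, J n' i • (∑ p',
              HopfAlgebra.antipode (R := k) (HopfAlgebra.antipode (R := k) (ℓm p' m')) *
                (C * HopfAlgebra.antipode (R := k) (ℓm i p'))) := by
            rw [Finset.sum_comm]
            exact Finset.sum_congr rfl fun i _ => (Finset.smul_sum).symm
        _ = ∑ i, J n' i • adR k (HopfAlgebra.antipode (R := k) (ℓm i m')) C := by
            refine Finset.sum_congr rfl fun i _ => ?_
            rw [← hadR1]
    have hR : ∑ p', HopfAlgebra.antipode (R := k) (HopfAlgebra.antipode (R := k) (ℓm p' m')) *
          (∑ n'', ∑ i, ∑ j, J j i • (HopfAlgebra.antipode (R := k) (ℓm i p') * ℓp n'' j *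
            (C * σinv (ℓp n' n''))))
        = ∑ i, J i m' • adR k (σinv (ℓp n' i)) C := by
      calc ∑ p', HopfAlgebra.antipode (R := k) (HopfAlgebra.antipode (R := k) (ℓm p' m')) *
            (∑ n'', ∑ i, ∑ j, J j i • (HopfAlgebra.antipode (R := k) (ℓm i p') * ℓp n'' j *
              (C * σinv (ℓp n' n''))))
          = ∑ p', ∑ n'', ∑ i, ∑ j, J j i •
              ((HopfAlgebra.antipode (R := k) (HopfAlgebra.antipode (R := k) (ℓm p' m')) *
                HopfAlgebra.antipode (R := k) (ℓm i p')) *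
                  (ℓp n'' j * (C * σinv (ℓp n' n'')))) := by
            refine Finset.sum_congr rfl fun p' _ => ?_
            rw [Finset.mul_sum]
            refine Finset.sum_congr rfl fun n'' _ => ?_
            rw [Finset.mul_sum]
            refine Finset.sum_congr rfl fun i _ => ?_
            rw [Finset.mul_sum]
            refine Finset.sum_congr rfl fun j _ => ?_
            rw [mul_smul_comm]
            congr 1
            noncomm_ring
        _ = ∑ n'', ∑ i, ∑ j, J j i •
              ((∑ p', HopfAlgebra.antipode (R := k) (HopfAlgebra.antipode (R := k) (ℓm p' m')) *
                HopfAlgebra.antipode (R := k) (ℓm i p')) *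
                  (ℓp n'' j * (C * σinv (ℓp n' n'')))) := by
            rw [sum4_rotate]
            refine Finset.sum_congr rfl fun n'' _ => Finset.sum_congr rfl fun i _ =>
              Finset.sum_congr rfl fun j _ => ?_
            rw [← Finset.smul_sum, ← Finset.sum_mul]
        _ = ∑ n'', ∑ j, J j m' • (ℓp n'' j * (C * σinv (ℓp n' n''))) := by
            refine Finset.sum_congr rfl fun n'' _ => ?_
            rw [Finset.sum_comm]
            refine Finset.sum_congr rfl fun j _ => ?_
            simp [hB1, ite_mul, one_mul, zero_mul, ite_smul, Finset.sum_ite_eq']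
        _ = ∑ j, J j m' • (∑ n'', ℓp n'' j * (C * σinv (ℓp n' n''))) := by
            rw [Finset.sum_comm]
            exact Finset.sum_congr rfl fun j _ => (Finset.smul_sum).symm
        _ = ∑ i, J i m' • adR k (σinv (ℓp n' i)) C := by
            refine Finset.sum_congr rfl fun j _ => ?_
            rw [← hadR2]
    rw [← hL, h2, hR]
  -- final coefficient extraction
  have hf' : ∀ q1 q2 : Fin N, f (a, b) (ℓ q1 q2) = if q2 = b ∧ q1 = a then (1 : k) else 0 := by
    intro q1 q2
    have h := hf (a, b) (q1, q2)
    simpa [Prod.mk.injEq, and_comm] using h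
  have hfsum : ∀ (c : Fin N → Fin N → Fin N → k),
      f (a, b) (∑ a', ∑ b', ∑ l, c a' b' l • ℓ a' b') = ∑ l, c a b l := by
    intro c
    rw [map_sum]
    calc ∑ a', f (a, b) (∑ b', ∑ l, c a' b' l • ℓ a' b')
        = ∑ a', ∑ b', (∑ l, c a' b' l) * (if b' = b ∧ a' = a then 1 else 0) := by
          refine Finset.sum_congr rfl fun a' _ => ?_
          rw [map_sum]
          refine Finset.sum_congr rfl fun b' _ => ?_
          rw [map_sum]
          simp only [map_smul, smul_eq_mul]
          rw [← Finset.sum_mul, hf']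
      _ = ∑ l, c a b l := by
          simp [mul_ite, mul_one, mul_zero, ite_and, Finset.sum_ite_eq']
  have inner1 : ∀ i, f (a, b) (adR k (HopfAlgebra.antipode (R := k) (ℓm i m)) C)
      = ∑ i', ∑ j, J j i' * ∑ l, Rm l i' m a * Rtm i b l j := by
    intro i
    calc f (a, b) (adR k (HopfAlgebra.antipode (R := k) (ℓm i m)) C)
        = ∑ i', ∑ j, J j i' * f (a, b) (adR k (HopfAlgebra.antipode (R := k) (ℓm i m)) (ℓ i' j)) := by
          rw [hC, map_sum, map_sum]
          refine Finset.sum_congr rfl fun i' _ => ?_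
          rw [map_sum, map_sum]
          refine Finset.sum_congr rfl fun j _ => ?_
          rw [map_smul, map_smul, smul_eq_mul]
      _ = ∑ i', ∑ j, J j i' * ∑ l, Rm l i' m a * Rtm i b l j := by
          refine Finset.sum_congr rfl fun i' _ => Finset.sum_congr rfl fun j _ => ?_
          rw [hd, hfsum (fun a' b' l => Rm l i' m a' * Rtm i b' l j)]
  have inner2 : ∀ i, f (a, b) (adR k (σinv (ℓp n i)) C)
      = ∑ i', ∑ j, J j i' * ∑ l, Rm b n j l * Rtm i' l a i := by
    intro i
    calc f (a, b) (adR k (σinv (ℓp n i)) C)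
        = ∑ i', ∑ j, J j i' * f (a, b) (adR k (σinv (ℓp n i)) (ℓ i' j)) := by
          rw [hC, map_sum, map_sum]
          refine Finset.sum_congr rfl fun i' _ => ?_
          rw [map_sum, map_sum]
          refine Finset.sum_congr rfl fun j _ => ?_
          rw [map_smul, map_smul, smul_eq_mul]
      _ = ∑ i', ∑ j, J j i' * ∑ l, Rm b n j l * Rtm i' l a i := by
          refine Finset.sum_congr rfl fun i' _ => Finset.sum_congr rfl fun j _ => ?_
          rw [he, hfsum (fun a' b' l => Rm b' n j l * Rtm i' l a' i)]
  have hfin := congrArg (f (a, b)) (hkey m n)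
  rw [map_sum, map_sum] at hfin
  simp only [map_smul, smul_eq_mul, inner1, inner2] at hfin
  calc ∑ i, ∑ j, ∑ i', ∑ l, J n i * Rtm i b l j * J j i' * Rm l i' m a
      = ∑ i, J n i * (∑ i', ∑ j, J j i' * ∑ l, Rm l i' m a * Rtm i b l j) := by
        refine Finset.sum_congr rfl fun i _ => ?_
        simp only [Finset.mul_sum]
        rw [Finset.sum_comm]
        exact Finset.sum_congr rfl fun j _ => Finset.sum_congr rfl fun i' _ =>
          Finset.sum_congr rfl fun l _ => by ring
    _ = ∑ i, J i m * (∑ i', ∑ j, J j i' * ∑ l, Rm b n j l * Rtm i' l a i) := hfin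
    _ = ∑ i, ∑ j, ∑ i', ∑ l, Rm b n j l * J j i' * Rtm i' l a i * J i m := by
        refine Finset.sum_congr rfl fun i _ => ?_
        simp only [Finset.mul_sum]
        rw [Finset.sum_comm]
        exact Finset.sum_congr rfl fun i' _ => Finset.sum_congr rfl fun j _ =>
          Finset.sum_congr rfl fun l _ => by ring
end

section
/- Let H be a Hopf algebra over a field k, let t ∈ H be grouplike, and let x ∈ H satisfy Δx = t ⊗ x + x ⊗ 1. Then for all C ∈ H one has Δ((ad_r x)C) = Σ (ad_r x)C₍₁₎ ⊗ t⁻¹C₍₂₎ + (ad_r t)C₍₁₎ ⊗ t⁻¹C₍₂₎x − C₍₁₎ ⊗ t⁻¹xC₍₂₎, where ΔC = C₍₁₎ ⊗ C₍₂₎. -/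
open scoped TensorProduct

/-- Let `t ∈ H` be grouplike (with inverse `tinv = σ(t)`) and let `x` satisfy
`Δx = t ⊗ x + x ⊗ 1`.  Then for all `C ∈ H` (with `ΔC = Σ C₍₁₎ ⊗ C₍₂₎` an arbitrary
finite representation) one has
`Δ((ad_r x)C) = Σ (ad_r x)C₍₁₎ ⊗ t⁻¹C₍₂₎ + (ad_r t)C₍₁₎ ⊗ t⁻¹C₍₂₎x − C₍₁₎ ⊗ t⁻¹xC₍₂₎`. -/
theorem comul_adR_skewPrimitive
    (k H : Type*) [Field k] [Ring H] [HopfAlgebra k H]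
    (t tinv x : H)
    (hΔt : Coalgebra.comul (R := k) t = t ⊗ₜ[k] t)
    (hεt : Coalgebra.counit (R := k) t = 1)
    (htinv1 : t * tinv = 1) (htinv2 : tinv * t = 1)
    (hΔx : Coalgebra.comul (R := k) x = t ⊗ₜ[k] x + x ⊗ₜ[k] 1)
    (C : H) {ι : Type*} (s : Finset ι) (C1 C2 : ι → H)
    (hC : Coalgebra.comul (R := k) C = ∑ i ∈ s, C1 i ⊗ₜ[k] C2 i) :
    Coalgebra.comul (R := k) (adR k x C) =
      (∑ i ∈ s, (adR k x (C1 i)) ⊗ₜ[k] (tinv * C2 i))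
      + (∑ i ∈ s, (adR k t (C1 i)) ⊗ₜ[k] (tinv * C2 i * x))
      - ∑ i ∈ s, (C1 i) ⊗ₜ[k] (tinv * x * C2 i) := by
  -- antipode of t is tinv
  have hσt : HopfAlgebra.antipode (R := k) t = tinv := by
    have h1 := HopfAlgebra.mul_antipode_rTensor_comul_apply (R := k) (a := t)
    rw [hΔt, hεt, map_one] at h1
    simp only [LinearMap.rTensor_tmul, LinearMap.mul'_apply] at h1
    calc HopfAlgebra.antipode (R := k) t
        = HopfAlgebra.antipode (R := k) t * (t * tinv) := by rw [htinv1, mul_one]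
      _ = (HopfAlgebra.antipode (R := k) t * t) * tinv := by rw [mul_assoc]
      _ = tinv := by rw [h1, one_mul]
  -- counit of x is zero (as an element of H)
  have hεx : (algebraMap k H) (Coalgebra.counit (R := k) x) = 0 := by
    have h := Coalgebra.rTensor_counit_comul (R := k) x
    rw [hΔx, map_add] at h
    simp only [LinearMap.rTensor_tmul, hεt] at h
    have h2 : (Coalgebra.counit (R := k) x) ⊗ₜ[k] (1 : H) = 0 := by
      have := add_left_cancel (a := (1 : k) ⊗ₜ[k] x)
        (b := Coalgebra.counit (R := k) x ⊗ₜ[k] (1 : H)) (c := 0)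
      rw [add_zero] at this
      exact this h
    have h3 := congrArg (TensorProduct.lid k H) h2
    simpa [Algebra.algebraMap_eq_smul_one] using h3
  -- antipode of x
  have hσx : HopfAlgebra.antipode (R := k) x = -(tinv * x) := by
    have h1 := HopfAlgebra.mul_antipode_rTensor_comul_apply (R := k) (a := x)
    rw [hΔx, map_add] at h1
    simp only [LinearMap.rTensor_tmul, LinearMap.mul'_apply, map_add, hσt, mul_one,
      Algebra.linearMap_apply, hεx] at h1
    exact eq_neg_of_add_eq_zero_right h1
  -- formula for adR x
  have hadRx : ∀ u : H, adR k x u = tinv * (u * x) - tinv * x * u := by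
    intro u
    simp only [adR, hΔx, map_add, TensorProduct.lift.tmul, LinearMap.mk₂_apply,
      LinearMap.add_apply, LinearMap.coe_comp, Function.comp_apply,
      LinearMap.mulLeft_apply, LinearMap.mulRight_apply, hσt, hσx, mul_one,
      neg_mul, sub_eq_add_neg, mul_assoc]
  have hadRt : ∀ u : H, adR k t u = tinv * (u * t) := by
    intro u
    simp only [adR, hΔt, TensorProduct.lift.tmul, LinearMap.mk₂_apply,
      LinearMap.coe_comp, Function.comp_apply,
      LinearMap.mulLeft_apply, LinearMap.mulRight_apply, hσt]
  -- comul of tinv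
  have hΔtinv : Coalgebra.comul (R := k) tinv = tinv ⊗ₜ[k] tinv := by
    have h1 : (t ⊗ₜ[k] t) * Coalgebra.comul (R := k) tinv = 1 := by
      rw [← hΔt, ← Bialgebra.comul_mul, htinv1, Bialgebra.comul_one]
    calc Coalgebra.comul (R := k) tinv
        = ((tinv ⊗ₜ[k] tinv) * (t ⊗ₜ[k] t)) * Coalgebra.comul (R := k) tinv := by
          rw [Algebra.TensorProduct.tmul_mul_tmul, htinv2]
          rw [← Algebra.TensorProduct.one_def, one_mul]
      _ = (tinv ⊗ₜ[k] tinv) * ((t ⊗ₜ[k] t) * Coalgebra.comul (R := k) tinv) := by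
          rw [mul_assoc]
      _ = tinv ⊗ₜ[k] tinv := by rw [h1, mul_one]
  -- main computation
  rw [hadRx C, map_sub]
  simp only [Bialgebra.comul_mul, hΔtinv, hΔx, hC]
  simp only [hadRx, hadRt]
  simp only [Finset.mul_sum, Finset.sum_mul, mul_add, add_mul, Finset.sum_add_distrib,
    Algebra.TensorProduct.tmul_mul_tmul, TensorProduct.sub_tmul, Finset.sum_sub_distrib,
    mul_one, one_mul, ← mul_assoc, htinv2]
  abel
end

section
/- Let H be a Hopf algebra over a field k, let t ∈ H be grouplike, and let y ∈ H satisfy Δy = 1 ⊗ y + y ⊗ t⁻¹. Then for all C ∈ H one has Δ((ad_r y)C) = Σ (ad_r y)C₍₁₎ ⊗ C₍₂₎t⁻¹ + C₍₁₎ ⊗ C₍₂₎y − (ad_r t⁻¹)C₍₁₎ ⊗ y t C₍₂₎ t⁻¹, where ΔC = C₍₁₎ ⊗ C₍₂₎. -/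
open scoped TensorProduct

/-- Let `t ∈ H` be grouplike (with inverse `tinv = σ(t)`) and let `y` satisfy
`Δy = 1 ⊗ y + y ⊗ t⁻¹`.  Then for all `C ∈ H` (with `ΔC = Σ C₍₁₎ ⊗ C₍₂₎` an arbitrary
finite representation) one has
`Δ((ad_r y)C) = Σ (ad_r y)C₍₁₎ ⊗ C₍₂₎t⁻¹ + C₍₁₎ ⊗ C₍₂₎y − (ad_r t⁻¹)C₍₁₎ ⊗ y t C₍₂₎ t⁻¹`. -/
theorem comul_adR_skewPrimitive'
    (k H : Type*) [Field k] [Ring H] [HopfAlgebra k H]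
    (t tinv y : H)
    (hΔt : Coalgebra.comul (R := k) t = t ⊗ₜ[k] t)
    (hεt : Coalgebra.counit (R := k) t = 1)
    (htinv1 : t * tinv = 1) (htinv2 : tinv * t = 1)
    (hΔy : Coalgebra.comul (R := k) y = 1 ⊗ₜ[k] y + y ⊗ₜ[k] tinv)
    (C : H) {ι : Type*} (s : Finset ι) (C1 C2 : ι → H)
    (hC : Coalgebra.comul (R := k) C = ∑ i ∈ s, C1 i ⊗ₜ[k] C2 i) :
    Coalgebra.comul (R := k) (adR k y C) =
      (∑ i ∈ s, (adR k y (C1 i)) ⊗ₜ[k] (C2 i * tinv))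
      + (∑ i ∈ s, (C1 i) ⊗ₜ[k] (C2 i * y))
      - ∑ i ∈ s, (adR k tinv (C1 i)) ⊗ₜ[k] (y * t * C2 i * tinv) := by
  have hσ1 : HopfAlgebra.antipode (R := k) (1:H) = 1 := by
    have := HopfAlgebra.mul_antipode_rTensor_comul_apply (R := k) (A := H) 1
    simpa [Algebra.TensorProduct.one_def] using this
  have hεy : Coalgebra.counit (R := k) y ⊗ₜ[k] tinv = (0 : k ⊗[k] H) := by
    have h := Coalgebra.rTensor_counit_comul (R := k) y
    rw [hΔy, map_add] at h
    simp only [LinearMap.rTensor_tmul, Bialgebra.counit_one] at h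
    linear_combination (norm := module) h
  have hεy1 : Coalgebra.counit (R := k) y • (1:H) = 0 := by
    have h := congrArg (TensorProduct.lid k H) hεy
    simp only [TensorProduct.lid_tmul, map_zero] at h
    calc Coalgebra.counit (R := k) y • (1:H)
        = (Coalgebra.counit (R := k) y • tinv) * t := by rw [smul_mul_assoc, htinv2]
      _ = 0 := by rw [h, zero_mul]
  have hσy : HopfAlgebra.antipode (R := k) y = -(y * t) := by
    have h := HopfAlgebra.mul_antipode_rTensor_comul_apply (R := k) y
    rw [hΔy, map_add] at h
    simp only [LinearMap.rTensor_tmul, map_add, LinearMap.mul'_apply, hσ1, one_mul,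
      Algebra.algebraMap_eq_smul_one, hεy1] at h
    have h2 : HopfAlgebra.antipode (R := k) y * tinv = -y :=
      eq_neg_of_add_eq_zero_right h
    calc HopfAlgebra.antipode (R := k) y
        = HopfAlgebra.antipode (R := k) y * tinv * t := by rw [mul_assoc, htinv2, mul_one]
      _ = -(y * t) := by rw [h2, neg_mul]
  have hΔtinv : Coalgebra.comul (R := k) tinv = tinv ⊗ₜ[k] tinv := by
    have h : (t ⊗ₜ[k] t) * Coalgebra.comul (R := k) tinv = 1 := by
      rw [← hΔt, ← Bialgebra.comul_mul, htinv1, Bialgebra.comul_one]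
    calc Coalgebra.comul (R := k) tinv
        = ((tinv ⊗ₜ[k] tinv) * (t ⊗ₜ[k] t)) * Coalgebra.comul (R := k) tinv := by
          rw [Algebra.TensorProduct.tmul_mul_tmul, htinv2, ← Algebra.TensorProduct.one_def,
            one_mul]
      _ = (tinv ⊗ₜ[k] tinv) * ((t ⊗ₜ[k] t) * Coalgebra.comul (R := k) tinv) := by
          rw [mul_assoc]
      _ = tinv ⊗ₜ[k] tinv := by rw [h, mul_one]
  have hεtinv : Coalgebra.counit (R := k) tinv = 1 := by
    have : Coalgebra.counit (R := k) (t * tinv) = 1 := by rw [htinv1, Bialgebra.counit_one]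
    rwa [Bialgebra.counit_mul, hεt, one_mul] at this
  have hσtinv : HopfAlgebra.antipode (R := k) tinv = t := by
    have h := HopfAlgebra.mul_antipode_rTensor_comul_apply (R := k) tinv
    rw [hΔtinv] at h
    simp only [LinearMap.rTensor_tmul, LinearMap.mul'_apply, hεtinv, map_one] at h
    calc HopfAlgebra.antipode (R := k) tinv
        = HopfAlgebra.antipode (R := k) tinv * tinv * t := by rw [mul_assoc, htinv2, mul_one]
      _ = t := by rw [h, one_mul]
  have hadRy : ∀ u : H, adR k y u = u * y - y * t * u * tinv := by
    intro u
    simp only [adR, hΔy, map_add, TensorProduct.lift.tmul, LinearMap.mk₂_apply,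
      LinearMap.add_apply, LinearMap.comp_apply, LinearMap.mulLeft_apply,
      LinearMap.mulRight_apply, hσ1, hσy, one_mul, neg_mul]
    noncomm_ring
  have hadRtinv : ∀ u : H, adR k tinv u = t * u * tinv := by
    intro u
    simp only [adR, hΔtinv, TensorProduct.lift.tmul, LinearMap.mk₂_apply,
      LinearMap.comp_apply, LinearMap.mulLeft_apply, LinearMap.mulRight_apply, hσtinv]
    noncomm_ring
  rw [hadRy C]
  have key : Coalgebra.comul (R := k) (C * y - y * t * C * tinv)
      = Coalgebra.comul (R := k) C * Coalgebra.comul (R := k) y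
        - Coalgebra.comul (R := k) y * Coalgebra.comul (R := k) t
          * Coalgebra.comul (R := k) C * Coalgebra.comul (R := k) tinv := by
    rw [map_sub, Bialgebra.comul_mul, Bialgebra.comul_mul, Bialgebra.comul_mul,
      Bialgebra.comul_mul]
  rw [key, hΔy, hΔt, hΔtinv, hC]
  simp only [hadRy, hadRtinv, TensorProduct.sub_tmul, Finset.sum_sub_distrib,
    add_mul, mul_add, Finset.sum_mul, Finset.mul_sum, Algebra.TensorProduct.tmul_mul_tmul,
    one_mul, mul_one, htinv2, mul_assoc, Finset.sum_add_distrib]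
  abel
end
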